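/- With $\pi : C \to P_1[n,k]$ the bijection between increasing sequences and lattice paths, and $\Omega : \mathbb{Z}^{kk'} \to B^{k,\infty}$ the bijection $\Omega(x)_{ji} = x^{(k-j+1)}_i - x^{(k-j+1)}_{i-1}$, one has for every $x \in \mathbb{Z}^{kk'}$ and $c \in C$: $\Delta_{\Omega(x)}(c) = -\,ux(\pi(c))$, where $ux(p) = \sum_{s} (x^{(l)}_m - x^{(l)}_{m+1})$ is the sum over horizontal strips $s = (l,m)$–$(l,m+1)$ of the path $p$. -/

import Mathlib

attribute [local instance] Classical.propDecidable

noncomputable section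

/-- Validity of a lattice index `(l,m)` of `L₁[n,k]`. -/
def L1idx (n k l m : ℕ) : Prop := 1 ≤ l ∧ l ≤ k ∧ k < l + m ∧ l + m ≤ n + 1

/-- `ℤ^{kk'}`, realized as integer functions supported on the index set of `L₁[n,k]`
(so that `x^{(l)}_m = 0` outside the index range, as required). -/
def ZLat (n k : ℕ) : Set (ℕ → ℕ → ℤ) :=
  {x | ∀ l m, ¬ L1idx n k l m → x l m = 0}

/-- The map `Ω`, `Ω(x)_{ji} = x^{(k-j+1)}_i - x^{(k-j+1)}_{i-1}`. -/
def OmegaMap (k : ℕ) (x : ℕ → ℕ → ℤ) : ℕ → ℕ → ℤ := fun j i =>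
  if 1 ≤ j ∧ j ≤ k then x (k - j + 1) i - x (k - j + 1) (i - 1) else 0

/-- The set `C = {(c₀,…,c_k) : 1 = c₀ < c₁ < ⋯ < c_k ≤ n+1}`. -/
def Cfin (n k : ℕ) : Finset (Fin (k + 1) → Fin (n + 2)) :=
  Finset.univ.filter fun c => (c 0 : ℕ) = 1 ∧ StrictMono c

/-- `Δ_b(c) = ∑_{j=1}^k ∑_{c_{j-1} < i < c_j} b_{ji}`. -/
def DeltaF (n k : ℕ) (b : ℕ → ℕ → ℤ) (c : Fin (k + 1) → Fin (n + 2)) : ℤ :=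
  ∑ j : Fin k, ∑ i ∈ Finset.Ioo (c j.castSucc : ℕ) (c j.succ : ℕ), b ((j : ℕ) + 1) i

/-- The tropical path weight `ux(π(c)) = ∑ (x^{(l)}_m - x^{(l)}_{m+1})`, summed over
the horizontal strips of the path `π(c)`; on the run at level `k - j + 1`
(from column `c_{j-1}` to column `c_j - 1`) this telescopes to
`x^{(k-j+1)}_{c_{j-1}} - x^{(k-j+1)}_{c_j - 1}`. -/
def uxwt (n k : ℕ) (x : ℕ → ℕ → ℤ) (c : Fin (k + 1) → Fin (n + 2)) : ℤ :=
  ∑ j : Fin k,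
    (x (k - (j : ℕ)) (c j.castSucc) - x (k - (j : ℕ)) ((c j.succ : ℕ) - 1))

/-- `Δ_{Ω(x)}(c) = - ux(π(c))` for every `x ∈ ℤ^{kk'}` and `c ∈ C`. -/
theorem stmt9 (n k : ℕ) (hk : 1 ≤ k) (hkn : k ≤ n)
    (x : ℕ → ℕ → ℤ) (hx : x ∈ ZLat n k) :
    ∀ c ∈ Cfin n k, DeltaF n k (OmegaMap k x) c = - uxwt n k x c := by
  have tele : ∀ (f : ℕ → ℤ) (b a : ℕ), a < b →
      ∑ i ∈ Finset.Ioo a b, (f i - f (i - 1)) = f (b - 1) - f a := by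
    intro f b
    induction b with
    | zero => intro a h; omega
    | succ b ih =>
      intro a h
      rcases Nat.lt_or_ge a b with h' | h'
      · rw [show Finset.Ioo a (b + 1) = insert b (Finset.Ioo a b) by
          ext i; simp [Finset.mem_Ioo]; omega]
        rw [Finset.sum_insert (by simp), ih a h']
        have hb : b - 1 + 1 = b := by omega
        simp only [Nat.add_sub_cancel]
        omega
      · have : a = b := by omega
        subst this
        rw [show Finset.Ioo a (a + 1) = ∅ by ext i; simp]
        simp
  intro c hc
  simp only [Cfin, Finset.mem_filter] at hc
  obtain ⟨-, -, hmono⟩ := hc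
  unfold DeltaF uxwt
  rw [← Finset.sum_neg_distrib]
  apply Finset.sum_congr rfl
  intro j _
  have hlt : (c j.castSucc : ℕ) < (c j.succ : ℕ) :=
    hmono (by simp [Fin.lt_def])
  have hcond : 1 ≤ (j : ℕ) + 1 ∧ (j : ℕ) + 1 ≤ k := ⟨by omega, j.isLt⟩
  have hkj : k - ((j : ℕ) + 1) + 1 = k - (j : ℕ) := by
    have := j.isLt; omega
  simp only [OmegaMap, if_pos hcond, hkj]
  rw [tele _ _ _ hlt]
  ring
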